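/- Assume R is continuously differentiable, R^aug(A) ≥ 0 for all A ∈ L, and let γ > 0. If A : [0,∞) → L is a differentiable curve satisfying the regularized augmented gradient flow A'(t) = −Π_L ∇R^aug(A(t)) − γ Π_{E⊥} A(t) for all t ≥ 0, then for every t ≥ 0 the a priori bound ‖Π_{E⊥} A(t)‖² ≤ (2/γ) R^aug(A(0)) + ‖Π_{E⊥} A(0)‖² holds. -/

import Mathlib

open MeasureTheory InnerProductSpace RealInnerProductSpace

noncomputable section

/-- The fixed-point subspace `H_G = {v : ρ(g) v = v for all g}` of an orthogonal
representation `ρ : G → O(V)`. -/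
def fixedSubmodule {G V : Type*} [Group G] [NormedAddCommGroup V] [InnerProductSpace ℝ V]
    (ρ : G →* (V ≃ₗᵢ[ℝ] V)) : Submodule ℝ V where
  carrier := {v | ∀ g : G, ρ g v = v}
  add_mem' := by
    intro a b ha hb g
    simp [map_add, ha g, hb g]
  zero_mem' := by
    intro g
    simp
  smul_mem' := by
    intro c a ha g
    rw [_root_.map_smul, ha g]

/-- The orthogonal projection onto a subspace `K`, as a map `V → V`. -/
def projSub {V : Type*} [NormedAddCommGroup V] [InnerProductSpace ℝ V] (K : Submodule ℝ V)
    [K.HasOrthogonalProjection] : V →L[ℝ] V :=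
  K.subtypeL.comp K.orthogonalProjectionOnto

/-- The augmented risk `R^aug(A) = ∫_G R(ρ(g) A) dμ(g)`. -/
def augRisk {G V : Type*} [Group G] [MeasurableSpace G]
    [NormedAddCommGroup V] [InnerProductSpace ℝ V]
    (μ : Measure G) (ρ : G →* (V ≃ₗᵢ[ℝ] V)) (R : V → ℝ) : V → ℝ :=
  fun A => ∫ g, R (ρ g A) ∂μ

/-- The Hessian of `f : V → ℝ` at `A`, regarded as a linear map `V → V`
(the derivative of the gradient field). -/
def hess {V : Type*} [NormedAddCommGroup V] [InnerProductSpace ℝ V] [CompleteSpace V]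
    (f : V → ℝ) (A : V) : V →L[ℝ] V :=
  fderiv ℝ (gradient f) A

/-- auxiliary: inner product with a member of `K` sees only the projection. -/
lemma projSub_inner_eq {V : Type*} [NormedAddCommGroup V] [InnerProductSpace ℝ V]
    (K : Submodule ℝ V) [K.HasOrthogonalProjection] (v w : V) (hw : w ∈ K) :
    ⟪v, w⟫ = ⟪projSub K v, w⟫ := by
  have h := K.starProjection_inner_eq_zero v w hw
  rw [Submodule.starProjection_apply, inner_sub_left] at h
  have : projSub K v = (K.orthogonalProjectionOnto v : V) := rfl
  rw [this]; linarith

lemma projSub_mem {V : Type*} [NormedAddCommGroup V] [InnerProductSpace ℝ V]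
    (K : Submodule ℝ V) [K.HasOrthogonalProjection] (v : V) : projSub K v ∈ K :=
  (K.orthogonalProjectionOnto v).2

/-- auxiliary: continuity of `g ↦ ρ g` in the operator norm. -/
lemma rho_clm_cont {G V : Type*} [Group G] [TopologicalSpace G]
    [NormedAddCommGroup V] [InnerProductSpace ℝ V] [FiniteDimensional ℝ V]
    (ρ : G →* (V ≃ₗᵢ[ℝ] V)) (hρ : Continuous fun p : G × V => ρ p.1 p.2) :
    Continuous (fun g => LinearMap.toContinuousLinearMap (ρ g).toLinearEquiv.toLinearMap) := by
  set b := Module.finBasis ℝ V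
  set Ψ : (Fin (Module.finrank ℝ V) → V) →ₗ[ℝ] (V →L[ℝ] V) :=
    (LinearMap.toContinuousLinearMap.toLinearMap.comp (b.constr ℝ).toLinearMap)
  have hΨ : Continuous Ψ := Ψ.continuous_of_finiteDimensional
  have h1 : Continuous (fun g => Ψ (fun i => ρ g (b i))) := by
    apply hΨ.comp
    exact continuous_pi fun i => hρ.comp (continuous_id.prodMk continuous_const)
  convert h1 using 2 with g
  have : (b.constr ℝ (fun i => ρ g (b i))) = (ρ g).toLinearEquiv.toLinearMap := by
    apply b.ext
    intro i
    simp [Module.Basis.constr_basis]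
  simp only [Ψ, LinearMap.comp_apply, LinearEquiv.coe_toLinearMap, this]

/-- auxiliary: the augmented risk is differentiable everywhere. -/
lemma augRisk_differentiableAt {G V : Type*} [Group G] [TopologicalSpace G] [CompactSpace G]
    [MeasurableSpace G] [BorelSpace G]
    [NormedAddCommGroup V] [InnerProductSpace ℝ V] [FiniteDimensional ℝ V]
    (μ : Measure G) [IsProbabilityMeasure μ]
    (ρ : G →* (V ≃ₗᵢ[ℝ] V)) (hρ : Continuous fun p : G × V => ρ p.1 p.2)
    (R : V → ℝ) (hR : ContDiff ℝ 1 R) (x : V) :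
    DifferentiableAt ℝ (augRisk μ ρ R) x := by
  classical
  set ρclm : G → V →L[ℝ] V := fun g => LinearMap.toContinuousLinearMap (ρ g).toLinearEquiv.toLinearMap with hρclm
  have hρclm_apply : ∀ g v, ρclm g v = ρ g v := by intro g v; simp [ρclm]
  have hρclm_cont : Continuous ρclm := rho_clm_cont ρ hρ
  have hρx : ∀ v : V, Continuous (fun g => ρ g v) :=
    fun v => hρ.comp (continuous_id.prodMk continuous_const)
  set F' : V → G → (V →L[ℝ] ℝ) := fun y g => (fderiv ℝ R (ρ g y)).comp (ρclm g) with hF'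
  set K : Set V := (fun p : G × V => ρ p.1 p.2) '' (Set.univ ×ˢ Metric.closedBall x 1) with hK
  have hKc : IsCompact K := (isCompact_univ.prod (isCompact_closedBall x 1)).image hρ
  obtain ⟨C, hC⟩ := hKc.exists_bound_of_continuousOn ((hR.continuous_fderiv one_ne_zero).continuousOn)
  have hF_meas : ∀ᶠ y in nhds x, AEStronglyMeasurable (fun g => R (ρ g y)) μ :=
    Filter.Eventually.of_forall fun y => ((hR.continuous.comp (hρx y)).aestronglyMeasurable)
  have hF_int : Integrable (fun g => R (ρ g x)) μ := by
    obtain ⟨C0, hC0⟩ := isCompact_univ.exists_bound_of_continuousOn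
      ((hR.continuous.comp (hρx x)).continuousOn)
    exact (integrable_const C0).mono'
      ((hR.continuous.comp (hρx x)).aestronglyMeasurable)
      (Filter.Eventually.of_forall fun g => hC0 g trivial)
  have hF'_meas : AEStronglyMeasurable (F' x) μ := by
    apply Continuous.aestronglyMeasurable
    exact ((hR.continuous_fderiv one_ne_zero).comp (hρx x)).clm_comp hρclm_cont
  have h_bound : ∀ᵐ g ∂μ, ∀ y ∈ Metric.ball x 1, ‖F' y g‖ ≤ max C 0 := by
    refine Filter.Eventually.of_forall fun g y hy => ?_
    refine ContinuousLinearMap.opNorm_le_bound _ (le_max_right _ _) fun v => ?_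
    have hmem : ρ g y ∈ K := ⟨(g, y), ⟨trivial, Metric.ball_subset_closedBall hy⟩, rfl⟩
    calc ‖(F' y g) v‖ = ‖fderiv ℝ R (ρ g y) (ρ g v)‖ := by simp [F', hρclm_apply]
      _ ≤ ‖fderiv ℝ R (ρ g y)‖ * ‖ρ g v‖ := (fderiv ℝ R (ρ g y)).le_opNorm _
      _ = ‖fderiv ℝ R (ρ g y)‖ * ‖v‖ := by rw [(ρ g).norm_map]
      _ ≤ max C 0 * ‖v‖ := by
          apply mul_le_mul_of_nonneg_right _ (norm_nonneg _)
          exact le_trans (hC _ hmem) (le_max_left _ _)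
  have h_diff : ∀ᵐ g ∂μ, ∀ y ∈ Metric.ball x 1, HasFDerivAt (fun y => R (ρ g y)) (F' y g) y := by
    refine Filter.Eventually.of_forall fun g y hy => ?_
    have h2 : HasFDerivAt (fun y : V => ρ g y) (ρclm g) y := by
      have := (ρclm g).hasFDerivAt (x := y)
      convert this using 1
      exact funext fun v => (hρclm_apply g v).symm
    exact ((hR.differentiable one_ne_zero) (ρ g y)).hasFDerivAt.comp y h2
  have := hasFDerivAt_integral_of_dominated_of_fderiv_le (μ := μ)
    (F := fun y g => R (ρ g y)) (F' := F') (bound := fun _ => max C 0)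
    (Metric.ball_mem_nhds x zero_lt_one) hF_meas hF_int hF'_meas h_bound (integrable_const _) h_diff
  exact this.differentiableAt

/-- Along the regularized augmented gradient flow, the a priori bound
`‖Π_{Eᗮ} A(t)‖² ≤ (2/γ) R^aug(A(0)) + ‖Π_{Eᗮ} A(0)‖²` holds for all `t ≥ 0`. -/
theorem regularized_flow_apriori_bound
    {G V : Type*} [Group G] [TopologicalSpace G] [IsTopologicalGroup G] [CompactSpace G]
    [MeasurableSpace G] [BorelSpace G]
    [NormedAddCommGroup V] [InnerProductSpace ℝ V] [FiniteDimensional ℝ V]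
    (μ : Measure G) [μ.IsHaarMeasure] [IsProbabilityMeasure μ]
    (ρ : G →* (V ≃ₗᵢ[ℝ] V)) (hρ : Continuous fun p : G × V => ρ p.1 p.2)
    (L : Submodule ℝ V)
    (R : V → ℝ) (hR : ContDiff ℝ 1 R)
    (hpos : ∀ A ∈ L, 0 ≤ augRisk μ ρ R A)
    (γ : ℝ) (hγ : 0 < γ)
    (A : ℝ → V)
    (hmem : ∀ t : ℝ, 0 ≤ t → A t ∈ L)
    (hode : ∀ t : ℝ, 0 ≤ t → HasDerivAt A
      (-(projSub L (gradient (augRisk μ ρ R) (A t)))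
        - γ • projSub (L ⊓ (fixedSubmodule ρ ⊓ L)ᗮ) (A t)) t) :
    ∀ t : ℝ, 0 ≤ t →
      ‖projSub (L ⊓ (fixedSubmodule ρ ⊓ L)ᗮ) (A t)‖ ^ 2 ≤
        (2 / γ) * augRisk μ ρ R (A 0) + ‖projSub (L ⊓ (fixedSubmodule ρ ⊓ L)ᗮ) (A 0)‖ ^ 2 := by
  intro t ht
  set f := augRisk μ ρ R with hf
  set K' : Submodule ℝ V := L ⊓ (fixedSubmodule ρ ⊓ L)ᗮ with hK'
  set P : V →L[ℝ] V := projSub K' with hP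
  set Q : V →L[ℝ] V := projSub L with hQ
  -- Lyapunov function
  set φ : ℝ → ℝ := fun s => f (A s) + (γ / 2) * ⟪P (A s), P (A s)⟫ with hφ
  -- derivative of the Lyapunov function
  have hd : ∀ s : ℝ, 0 ≤ s →
      HasDerivAt φ (-(‖Q (gradient f (A s)) + γ • P (A s)‖ ^ 2)) s := by
    intro s hs
    set g := gradient f (A s) with hg
    set w : V := -(Q g) - γ • P (A s) with hw
    have hA' : HasDerivAt A w s := hode s hs
    -- derivative of f ∘ A
    have hdiff : DifferentiableAt ℝ f (A s) := augRisk_differentiableAt μ ρ hρ R hR (A s)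
    have hgrad : HasGradientAt f g (A s) := hdiff.hasGradientAt
    have h1 : HasDerivAt (fun u => f (A u)) ((toDual ℝ V g) w) s :=
      hgrad.hasFDerivAt.comp_hasDerivAt s hA'
    rw [toDual_apply_apply] at h1
    -- derivative of the quadratic part
    have hPA : HasDerivAt (fun u => P (A u)) (P w) s :=
      P.hasFDerivAt.comp_hasDerivAt s hA'
    have h2 : HasDerivAt (fun u => ⟪P (A u), P (A u)⟫) (⟪P (A s), P w⟫ + ⟪P w, P (A s)⟫) s :=
      hPA.inner ℝ hPA
    have h3 := h1.add (h2.const_mul (γ / 2))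
    refine h3.congr_deriv ?_
    -- algebraic identification of the derivative
    have hQg_mem : Q g ∈ L := projSub_mem L g
    have hPA_mem : P (A s) ∈ K' := projSub_mem K' (A s)
    have hPA_memL : P (A s) ∈ L := (inf_le_left : K' ≤ L) hPA_mem
    have hwL : w ∈ L := L.sub_mem (L.neg_mem hQg_mem) (L.smul_mem γ hPA_memL)
    have e1 : ⟪g, w⟫ = ⟪Q g, w⟫ := projSub_inner_eq L g w hwL
    have e2 : ⟪w, P (A s)⟫ = ⟪P w, P (A s)⟫ := projSub_inner_eq K' w (P (A s)) hPA_mem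
    have e3 : ⟪P (A s), P w⟫ = ⟪P w, P (A s)⟫ := real_inner_comm _ _
    set u : V := Q g + γ • P (A s) with hu
    have hwu : w = -u := by rw [hw, hu]; abel
    have e4 : ⟪u, w⟫ = -(‖u‖ ^ 2) := by
      rw [hwu, inner_neg_right, real_inner_self_eq_norm_sq]
    have e5 : ⟪u, w⟫ = ⟪Q g, w⟫ + γ * ⟪P (A s), w⟫ := by
      rw [hu, inner_add_left, real_inner_smul_left]
    have e6 : ⟪P (A s), w⟫ = ⟪w, P (A s)⟫ := real_inner_comm _ _
    have hfd : ⟪g, w⟫ + γ / 2 * (⟪P (A s), P w⟫ + ⟪P w, P (A s)⟫)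
        = -(‖u‖ ^ 2) := by
      rw [e1, e3, ← e2]
      linear_combination e4 - e5 - γ * e6
    linarith [hfd]
  -- antitone
  have hanti : AntitoneOn φ (Set.Ici (0 : ℝ)) := by
    apply antitoneOn_of_deriv_nonpos (convex_Ici 0)
    · exact fun s hs => (hd s hs).continuousAt.continuousWithinAt
    · rw [interior_Ici]
      exact fun s hs => (hd s (le_of_lt hs)).differentiableAt.differentiableWithinAt
    · rw [interior_Ici]
      intro s hs
      rw [(hd s (le_of_lt hs)).deriv]
      exact neg_nonpos.mpr (sq_nonneg _)
  have hle : φ t ≤ φ 0 := hanti Set.self_mem_Ici ht ht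
  have hposT : 0 ≤ f (A t) := hpos (A t) (hmem t ht)
  have hn : ∀ s : ℝ, ⟪P (A s), P (A s)⟫ = ‖P (A s)‖ ^ 2 := fun s =>
    real_inner_self_eq_norm_sq _
  rw [hφ] at hle
  simp only [hn] at hle
  -- conclude
  have key : γ / 2 * ‖P (A t)‖ ^ 2 ≤ f (A 0) + γ / 2 * ‖P (A 0)‖ ^ 2 := by linarith
  have h2' : ‖P (A t)‖ ^ 2 - ‖P (A 0)‖ ^ 2 ≤ 2 * f (A 0) / γ := by
    rw [le_div_iff₀ hγ]
    nlinarith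
  have : (2 / γ) * f (A 0) = 2 * f (A 0) / γ := by ring
  linarith [h2', this.ge]
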